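/- Let R > r > 0, a ∈ C^n, and let P be a polynomial of degree at most k in n complex variables. Then there exists a point w in the closed polydisk of radius r centered at a such that |P(w)| ≥ (r/R)^k · sup_{z ∈ Δ(a,R)} |P(z)|. -/

import Mathlib

open Polynomial

/-- One-variable lemma: if `f` has degree `≤ k` and `‖f‖ ≤ M` on the disk of radius `ρ ≤ 1`,
then `ρ^k * ‖f 1‖ ≤ M`. -/
lemma one_var_bound (k : ℕ) (f : Polynomial ℂ) (hf : f.natDegree ≤ k) (ρ : ℝ)
    (hρ0 : 0 < ρ) (hρ1 : ρ ≤ 1) (M : ℝ)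
    (hM : ∀ t : ℂ, ‖t‖ ≤ ρ → ‖f.eval t‖ ≤ M) :
    ρ ^ k * ‖f.eval 1‖ ≤ M := by
  set h : Polynomial ℂ := f.comp (Polynomial.C (ρ : ℂ) * Polynomial.X) with hh
  have hhdeg : h.natDegree ≤ k := by
    refine (Polynomial.natDegree_comp_le).trans ?_
    calc f.natDegree * (Polynomial.C (ρ : ℂ) * Polynomial.X).natDegree
        ≤ k * 1 := Nat.mul_le_mul hf (Polynomial.natDegree_C_mul_le _ _ |>.trans
          (by simp [Polynomial.natDegree_X]))
      _ = k := Nat.mul_one k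
  set g : Polynomial ℂ := h.reflect k with hg
  -- key identity: for x ≠ 0, g.eval x⁻¹⁻¹... we use eval₂_reflect_mul_pow
  have key : ∀ x : ℂ, x ≠ 0 → g.eval x * (x⁻¹) ^ k = f.eval ((ρ : ℂ) * x⁻¹) := by
    intro x hx
    have hx' : (x⁻¹ : ℂ) ≠ 0 := inv_ne_zero hx
    have : Invertible (x⁻¹ : ℂ) := invertibleOfNonzero hx'
    have hkey := Polynomial.eval₂_reflect_mul_pow (RingHom.id ℂ) (x⁻¹) k h hhdeg
    rw [invOf_eq_inv, inv_inv] at hkey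
    calc g.eval x * (x⁻¹) ^ k
        = Polynomial.eval₂ (RingHom.id ℂ) x (h.reflect k) * (x⁻¹) ^ k := rfl
      _ = Polynomial.eval₂ (RingHom.id ℂ) x⁻¹ h := hkey
      _ = h.eval x⁻¹ := rfl
      _ = f.eval ((ρ : ℂ) * x⁻¹) := by rw [hh, Polynomial.eval_comp]; simp
  -- bound g on the unit circle
  have hbound : ∀ s ∈ frontier (Metric.ball (0:ℂ) 1), ‖g.eval s‖ ≤ M := by
    intro s hs
    rw [frontier_ball (0:ℂ) one_ne_zero, Metric.mem_sphere, dist_zero_right] at hs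
    have hs0 : s ≠ 0 := by
      intro h0; rw [h0] at hs; simp at hs
    have := key s hs0
    have habs : ‖f.eval ((ρ : ℂ) * s⁻¹)‖ ≤ M := by
      apply hM
      have habs_s : ‖s‖ = 1 := hs
      rw [norm_mul, norm_inv, habs_s]
      simp [Complex.norm_real, abs_of_pos hρ0]
    calc ‖g.eval s‖ = ‖g.eval s * (s⁻¹) ^ k‖ := by
          rw [norm_mul, norm_pow, norm_inv, hs]; simp
      _ = ‖f.eval ((ρ : ℂ) * s⁻¹)‖ := by rw [this]
      _ ≤ M := habs
  -- maximum modulus principle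
  have hmem : (ρ : ℂ) ∈ closure (Metric.ball (0:ℂ) 1) := by
    rw [closure_ball (0:ℂ) one_ne_zero, Metric.mem_closedBall, dist_zero_right]
    simpa [Complex.norm_real, abs_of_pos hρ0] using hρ1
  have hmax : ‖g.eval (ρ : ℂ)‖ ≤ M :=
    Complex.norm_le_of_forall_mem_frontier_norm_le Metric.isBounded_ball
      (Polynomial.differentiable g).diffContOnCl hbound hmem
  have hρc : (ρ : ℂ) ≠ 0 := by exact_mod_cast hρ0.ne'
  have := key (ρ : ℂ) hρc
  rw [mul_inv_cancel₀ hρc] at this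
  have : ‖g.eval (ρ : ℂ)‖ = ρ ^ k * ‖f.eval 1‖ := by
    have h2 : g.eval (ρ : ℂ) = f.eval 1 * (ρ : ℂ) ^ k := by
      rw [← this, mul_assoc, ← mul_pow, inv_mul_cancel₀ hρc, one_pow, mul_one]
    rw [h2, norm_mul, norm_pow, Complex.norm_real, Real.norm_eq_abs, abs_of_pos hρ0, mul_comm]
  linarith [hmax, this ▸ hmax]

/-- The open polydisk of radius `R` centered at `a` in `ℂⁿ`. -/
def polydisk (n : ℕ) (a : Fin n → ℂ) (R : ℝ) : Set (Fin n → ℂ) :=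
  {z | ∀ j, ‖z j - a j‖ < R}

/-- a polynomial of degree `≤ k` attains, at some point of the closed polydisk of
radius `r`, a value at least `(r/R)^k` times its supremum over `Δ(a,R)`. -/
theorem bernstein_lower_bound (n : ℕ) (a : Fin n → ℂ) (R r : ℝ) (hr : 0 < r) (hrR : r < R)
    (k : ℕ) (P : MvPolynomial (Fin n) ℂ) (hdeg : P.totalDegree ≤ k) :
    ∃ w : Fin n → ℂ, (∀ j, ‖w j - a j‖ ≤ r) ∧
      ∀ z ∈ polydisk n a R,
        (r / R) ^ k * ‖MvPolynomial.eval z P‖ ≤ ‖MvPolynomial.eval w P‖ := by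
  have hR : 0 < R := hr.trans hrR
  set K : Set (Fin n → ℂ) := Set.univ.pi (fun j => Metric.closedBall (a j) r) with hK
  have hKcompact : IsCompact K := isCompact_univ_pi (fun j => isCompact_closedBall _ _)
  have hKne : K.Nonempty := ⟨a, fun j _ => Metric.mem_closedBall_self hr.le⟩
  obtain ⟨w, hwK, hwmax⟩ := hKcompact.exists_isMaxOn hKne
    (Continuous.norm (MvPolynomial.continuous_eval P)).continuousOn
  have hwK' : ∀ j, ‖w j - a j‖ ≤ r := fun j => by
    have := hwK j (Set.mem_univ j)
    rwa [Metric.mem_closedBall, Complex.dist_eq] at this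
  refine ⟨w, hwK', fun z hz => ?_⟩
  set ρ : ℝ := r / R with hρ
  have hρ0 : 0 < ρ := div_pos hr hR
  have hρ1 : ρ ≤ 1 := le_of_lt (by rw [hρ, div_lt_one hR]; exact hrR)
  set f : Polynomial ℂ := MvPolynomial.aeval
    (fun j => Polynomial.C (z j - a j) * Polynomial.X + Polynomial.C (a j)) P with hf
  have hfdeg : f.natDegree ≤ k := by
    have := MvPolynomial.aeval_natDegree_le P hdeg
      (fun j => Polynomial.C (z j - a j) * Polynomial.X + Polynomial.C (a j))
      (fun j => Polynomial.natDegree_linear_le)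
    rw [hf]
    exact this.trans (Nat.mul_one k).le
  have hfeval : ∀ t : ℂ, f.eval t = MvPolynomial.eval (fun j => (z j - a j) * t + a j) P := by
    intro t
    have := congrFun (congrArg (DFunLike.coe)
      (MvPolynomial.comp_aeval (R := ℂ) (Polynomial.aeval t)
        (f := fun j => Polynomial.C (z j - a j) * Polynomial.X + Polynomial.C (a j)))) P
    simp only [AlgHom.coe_comp, Function.comp_apply] at this
    rw [hf]
    have h1 : (Polynomial.aeval t : Polynomial ℂ →ₐ[ℂ] ℂ) = Polynomial.evalRingHom t := by
      ext <;> simp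
    calc Polynomial.eval t (MvPolynomial.aeval
          (fun j => Polynomial.C (z j - a j) * Polynomial.X + Polynomial.C (a j)) P)
        = Polynomial.aeval t ((MvPolynomial.aeval
          (fun j => Polynomial.C (z j - a j) * Polynomial.X + Polynomial.C (a j))) P) := by
          rw [Polynomial.coe_aeval_eq_eval]
      _ = MvPolynomial.aeval (fun j => Polynomial.aeval t
            (Polynomial.C (z j - a j) * Polynomial.X + Polynomial.C (a j))) P := this
      _ = MvPolynomial.eval (fun j => (z j - a j) * t + a j) P := by
          have : (fun j => Polynomial.aeval t
              (Polynomial.C (z j - a j) * Polynomial.X + Polynomial.C (a j)))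
              = fun j => (z j - a j) * t + a j := by
            funext j; simp
          rw [this, ← MvPolynomial.coe_aeval_eq_eval]; rfl
  have hM : ∀ t : ℂ, ‖t‖ ≤ ρ →
      ‖f.eval t‖ ≤ ‖MvPolynomial.eval w P‖ := by
    intro t ht
    rw [hfeval]
    apply hwmax
    intro j _
    rw [Metric.mem_closedBall, Complex.dist_eq]
    have : (z j - a j) * t + a j - a j = (z j - a j) * t := by ring
    rw [this, norm_mul]
    calc ‖z j - a j‖ * ‖t‖ ≤ R * ρ := by
          apply mul_le_mul (hz j).le ht (norm_nonneg t) hR.le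
      _ = r := by rw [hρ]; field_simp
  have key := one_var_bound k f hfdeg ρ hρ0 hρ1 _ hM
  have hf1 : f.eval 1 = MvPolynomial.eval z P := by
    rw [hfeval]
    have : (fun j => (z j - a j) * 1 + a j) = z := by funext j; ring
    rw [this]
  rw [hf1] at key
  exact key
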